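/- In a DR-SEU representation, for every state θ_t ∈ Θ_t there exists a separating history for θ_t: a history h^t = (B_0,g_0,s_0;...;B_t,g_t,s_t) without ties such that QU_{θ_{k−1}}(B_k,g_k,s_k) = {π_{qu}(θ_k)} for all k ≤ t, where (θ_0,...,θ_{t−1}) is the predecessor sequence of θ_t. -/

import Mathlib

open Finset

/-- A simple lottery on `Z`. -/
def IsLottery {Z : Type*} (p : Z →₀ ℝ) : Prop :=
  (∀ z, 0 ≤ p z) ∧ p.sum (fun _ x => x) = 1

/-- `u` is an affine (expected-utility) functional on lotteries. -/
def IsAffineOnLotteries {Z : Type*} (u : (Z →₀ ℝ) → ℝ) : Prop :=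
  ∀ p q : Z →₀ ℝ, IsLottery p → IsLottery q → ∀ a : ℝ, 0 ≤ a → a ≤ 1 →
    u (a • p + (1 - a) • q) = a * u p + (1 - a) * u q

open scoped RealInnerProductSpace

lemma lottery_total {Z : Type*} {ι : Type*} (s : Finset ι) (w : ι → ℝ) (p : ι → Z →₀ ℝ) :
    (∑ i ∈ s, w i • p i).sum (fun _ x => x) = ∑ i ∈ s, w i * (p i).sum (fun _ x => x) := by
  classical
  induction s using Finset.induction_on with
  | empty => simp
  | insert _ _ hmem ih =>
    rw [Finset.sum_insert hmem, Finset.sum_insert hmem, ← ih,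
      Finsupp.sum_add_index (by intro z _; rfl) (by intro z _ x y; ring)]
    congr 1
    rw [Finsupp.sum_smul_index (by intro z; simp)]
    rw [Finsupp.sum, Finsupp.sum, Finset.mul_sum]

lemma lottery_conv {Z : Type*} {ι : Type*} (s : Finset ι) (w : ι → ℝ) (p : ι → Z →₀ ℝ)
    (hw : ∀ i ∈ s, 0 ≤ w i) (hs : ∑ i ∈ s, w i = 1) (hp : ∀ i ∈ s, IsLottery (p i)) :
    IsLottery (∑ i ∈ s, w i • p i) := by
  constructor
  · intro z
    rw [Finsupp.finset_sum_apply]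
    refine Finset.sum_nonneg fun i hi => ?_
    simp only [Finsupp.smul_apply, smul_eq_mul]
    exact mul_nonneg (hw i hi) ((hp i hi).1 z)
  · rw [lottery_total]
    rw [Finset.sum_congr rfl (fun i hi => by rw [(hp i hi).2, mul_one]), hs]

lemma affine_conv {Z : Type*} {u : (Z →₀ ℝ) → ℝ} (hu : IsAffineOnLotteries u)
    {ι : Type*} (s : Finset ι) (w : ι → ℝ) (p : ι → Z →₀ ℝ)
    (hw : ∀ i ∈ s, 0 ≤ w i) (hs : ∑ i ∈ s, w i = 1) (hp : ∀ i ∈ s, IsLottery (p i)) :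
    u (∑ i ∈ s, w i • p i) = ∑ i ∈ s, w i * u (p i) := by
  classical
  induction s using Finset.induction_on generalizing w with
  | empty => simp at hs
  | @insert a s' hmem ih =>
    rw [Finset.sum_insert hmem] at hs ⊢
    rw [Finset.sum_insert hmem]
    have hwa0 : 0 ≤ w a := hw a (Finset.mem_insert_self a s')
    have hwa1 : w a ≤ 1 := by
      have : (0:ℝ) ≤ ∑ i ∈ s', w i :=
        Finset.sum_nonneg fun i hi => hw i (Finset.mem_insert_of_mem hi)
      linarith
    rcases eq_or_lt_of_le hwa1 with h1 | h1
    · -- w a = 1, tail weights all zero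
      have htail : ∑ i ∈ s', w i = 0 := by linarith
      have hz : ∀ i ∈ s', w i = 0 :=
        (Finset.sum_eq_zero_iff_of_nonneg
          (fun i hi => hw i (Finset.mem_insert_of_mem hi))).1 htail
      have h2 : ∑ i ∈ s', w i • p i = 0 :=
        Finset.sum_eq_zero fun i hi => by rw [hz i hi, zero_smul]
      have h3 : ∑ i ∈ s', w i * u (p i) = 0 :=
        Finset.sum_eq_zero fun i hi => by rw [hz i hi, zero_mul]
      rw [h2, h3, h1, one_smul, add_zero, add_zero, one_mul]
    · -- w a < 1
      set t : ℝ := 1 - w a with ht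
      have htpos : 0 < t := by simp [ht]; linarith
      have hsum' : ∑ i ∈ s', w i / t = 1 := by
        rw [← Finset.sum_div]
        field_simp
        linarith
      have hq : IsLottery (∑ i ∈ s', (w i / t) • p i) :=
        lottery_conv s' (fun i => w i / t) p
          (fun i hi => div_nonneg (hw i (Finset.mem_insert_of_mem hi)) htpos.le)
          hsum' (fun i hi => hp i (Finset.mem_insert_of_mem hi))
      have hih := ih (fun i => w i / t)
        (fun i hi => div_nonneg (hw i (Finset.mem_insert_of_mem hi)) htpos.le)
        hsum' (fun i hi => hp i (Finset.mem_insert_of_mem hi))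
      have hrw : ∑ i ∈ s', w i • p i = t • ∑ i ∈ s', (w i / t) • p i := by
        rw [Finset.smul_sum]
        refine Finset.sum_congr rfl fun i hi => ?_
        rw [smul_smul]
        congr 1
        field_simp
      have := hu (p a) (∑ i ∈ s', (w i / t) • p i)
        (hp a (Finset.mem_insert_self a s')) hq (w a) hwa0 hwa1
      rw [hrw, show t • ∑ i ∈ s', (w i / t) • p i = (1 - w a) • ∑ i ∈ s', (w i / t) • p i by rw [← ht],
        this, hih]
      congr 1
      rw [← ht, Finset.mul_sum]
      refine Finset.sum_congr rfl fun i hi => ?_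
      field_simp

lemma const_act_value {S Z : Type*} [Fintype S] (q : S → ℝ) (hq : ∑ s, q s = 1)
    (u : (Z →₀ ℝ) → ℝ) (p : Z →₀ ℝ) : ∑ s, q s * u p = u p := by
  rw [← Finset.sum_mul, hq, one_mul]

lemma swap_act_value {S Z : Type*} [Fintype S] [DecidableEq S] (q : S → ℝ) (hq : ∑ s, q s = 1)
    (u : (Z →₀ ℝ) → ℝ) (p p' : Z →₀ ℝ) (s : S) :
    ∑ s', q s' * u (if s' = s then p else p') = u p' + q s * (u p - u p') := by
  have : ∀ s' : S, q s' * u (if s' = s then p else p')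
      = q s' * u p' + (if s' = s then q s' * (u p - u p') else 0) := by
    intro s'
    by_cases h : s' = s <;> simp [h] <;> ring
  rw [Finset.sum_congr rfl fun s' _ => this s', Finset.sum_add_distrib,
    Finset.sum_ite_eq' Finset.univ s, ← Finset.sum_mul, hq]
  simp

lemma exists_violation {S Z : Type*} [Fintype S] (q1 q2 : S → ℝ)
    (u1 u2 : (Z →₀ ℝ) → ℝ)
    (hq1 : ∑ s, q1 s = 1) (hq2 : ∑ s, q2 s = 1)
    (hnc1 : ∃ p p', IsLottery p ∧ IsLottery p' ∧ u1 p ≠ u1 p')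
    (hnc2 : ∃ p p', IsLottery p ∧ IsLottery p' ∧ u2 p ≠ u2 p')
    (hclash : ¬(q1 = q2 ∧ ∃ a : ℝ, 0 < a ∧ ∃ b : ℝ, ∀ p, IsLottery p → u1 p = a * u2 p + b))
    (a b : ℝ) (ha : 0 ≤ a) :
    ∃ c : S → Z →₀ ℝ, (∀ s, IsLottery (c s)) ∧
      (∑ s, q1 s * u1 (c s)) ≠ a * (∑ s, q2 s * u2 (c s)) + b := by
  classical
  by_contra hcon
  push_neg at hcon
  -- value on constant acts
  have hconst : ∀ p : Z →₀ ℝ, IsLottery p → u1 p = a * u2 p + b := by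
    intro p hp
    have := hcon (fun _ => p) (fun _ => hp)
    rwa [const_act_value q1 hq1, const_act_value q2 hq2] at this
  rcases eq_or_lt_of_le ha with h0 | hapos
  · -- a = 0 : u1 constant, contradiction
    obtain ⟨p, p', hp, hp', hne⟩ := hnc1
    exact hne (by rw [hconst p hp, hconst p' hp', ← h0, zero_mul, zero_mul])
  · -- a > 0 : derive q1 = q2 and affine relation
    obtain ⟨p, p', hp, hp', hne⟩ := hnc2
    have hD : u2 p - u2 p' ≠ 0 := sub_ne_zero.2 hne
    refine hclash ⟨funext fun s => ?_, a, hapos, b, hconst⟩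
    have hswap := hcon (fun s' => if s' = s then p else p')
      (fun s' => by by_cases h : s' = s <;> simp [h, hp, hp'])
    rw [swap_act_value q1 hq1, swap_act_value q2 hq2] at hswap
    have h1 := hconst p hp
    have h2 := hconst p' hp'
    have key : q1 s * (a * (u2 p - u2 p')) = q2 s * (a * (u2 p - u2 p')) := by
      linear_combination hswap - h2 - q1 s * h1 + q1 s * h2
    exact mul_right_cancel₀ (mul_ne_zero (ne_of_gt hapos) hD) key

lemma mix_lottery_and_value {S Z : Type*} [Fintype S] (q : S → ℝ)
    (hq1 : ∑ s, q s = 1) {u : (Z →₀ ℝ) → ℝ} (hu : IsAffineOnLotteries u)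
    {κ : Type*} [Fintype κ] (c₀ : S → Z →₀ ℝ) (c : κ → S → Z →₀ ℝ)
    (hc₀ : ∀ s, IsLottery (c₀ s)) (hc : ∀ k s, IsLottery (c k s))
    (α : κ → ℝ) (hα0 : ∀ k, 0 ≤ α k) (hα1 : ∑ k, α k ≤ 1) :
    (∀ s, IsLottery ((1 - ∑ k, α k) • c₀ s + ∑ k, α k • c k s)) ∧
    (∑ s, q s * u ((1 - ∑ k, α k) • c₀ s + ∑ k, α k • c k s))
      = (1 - ∑ k, α k) * (∑ s, q s * u (c₀ s)) + ∑ k, α k * (∑ s, q s * u (c k s)) := by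
  classical
  -- use weights over Option κ
  set W : Option κ → ℝ := fun o => o.elim (1 - ∑ k, α k) α with hW
  have hW0 : ∀ o, 0 ≤ W o := by
    rintro (_ | k)
    · simpa [hW] using sub_nonneg.2 hα1
    · exact hα0 k
  have hWsum : ∑ o : Option κ, W o = 1 := by
    rw [Fintype.sum_option]
    simp [hW]
  have hform : ∀ s : S, (1 - ∑ k, α k) • c₀ s + ∑ k, α k • c k s
      = ∑ o : Option κ, W o • (Option.elim o (c₀ s) (fun k => c k s)) := by
    intro s
    rw [Fintype.sum_option]
    simp [hW]
  have hlot : ∀ s, IsLottery ((1 - ∑ k, α k) • c₀ s + ∑ k, α k • c k s) := by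
    intro s
    rw [hform s]
    exact lottery_conv Finset.univ W _ (fun o _ => hW0 o) hWsum
      (fun o _ => by rcases o with _ | k; exacts [hc₀ s, hc k s])
  refine ⟨hlot, ?_⟩
  have hval : ∀ s : S, u ((1 - ∑ k, α k) • c₀ s + ∑ k, α k • c k s)
      = (1 - ∑ k, α k) * u (c₀ s) + ∑ k, α k * u (c k s) := by
    intro s
    rw [hform s, affine_conv hu Finset.univ W _ (fun o _ => hW0 o) hWsum
      (fun o _ => by rcases o with _ | k; exacts [hc₀ s, hc k s]), Fintype.sum_option]
    simp [hW]
  calc ∑ s, q s * u ((1 - ∑ k, α k) • c₀ s + ∑ k, α k • c k s)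
      = ∑ s, (q s * ((1 - ∑ k, α k) * u (c₀ s)) + ∑ k, q s * (α k * u (c k s))) := by
        refine Finset.sum_congr rfl fun s _ => ?_
        rw [hval s, mul_add, Finset.mul_sum]
    _ = (1 - ∑ k, α k) * (∑ s, q s * u (c₀ s)) + ∑ k, α k * (∑ s, q s * u (c k s)) := by
        rw [Finset.sum_add_distrib]
        congr 1
        · rw [Finset.mul_sum]; exact Finset.sum_congr rfl fun s _ => by ring
        · rw [Finset.sum_comm]
          refine Finset.sum_congr rfl fun k _ => ?_
          rw [Finset.mul_sum]; exact Finset.sum_congr rfl fun s _ => by ring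

lemma coord_le_norm {κ : Type*} [Fintype κ] (x : EuclideanSpace ℝ κ) (k : κ) : |x k| ≤ ‖x‖ := by
  rw [EuclideanSpace.norm_eq]
  calc |x k| = Real.sqrt (‖x k‖ ^ 2) := by
        rw [Real.sqrt_sq_eq_abs, Real.norm_eq_abs, abs_abs]
    _ ≤ Real.sqrt (∑ i, ‖x i‖ ^ 2) := Real.sqrt_le_sqrt
        (Finset.single_le_sum (fun i _ => sq_nonneg ‖x i‖) (Finset.mem_univ k))

lemma core_menu {S Z ι : Type*} [Fintype S] [Fintype ι] [Nonempty ι]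
    (q : ι → S → ℝ) (u : ι → (Z →₀ ℝ) → ℝ)
    (hq : ∀ i, (∀ s, 0 ≤ q i s) ∧ (∑ s, q i s) = 1)
    (hu : ∀ i, IsAffineOnLotteries (u i))
    (hnc : ∀ i, ∃ p p', IsLottery p ∧ IsLottery p' ∧ u i p ≠ u i p')
    (X : Finset ι)
    (hsep : ∀ i ∈ X, ∀ j ∈ X,
      (q i = q j ∧ u i = u j) ∨
      ¬(q i = q j ∧ ∃ a : ℝ, 0 < a ∧ ∃ b : ℝ, ∀ p, IsLottery p → u i p = a * u j p + b)) :
    ∃ f : ι → S → Z →₀ ℝ,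
      (∀ i s, IsLottery (f i s)) ∧
      (∀ i j, q i = q j → u i = u j → f i = f j) ∧
      (∀ i ∈ X, ∀ j ∈ X, ¬(q i = q j ∧ u i = u j) →
        (∑ s, q i s * u i (f j s)) < ∑ s, q i s * u i (f i s)) := by
  classical
  choose p p' hp hp' hpne using hnc
  obtain ⟨i₀⟩ := ‹Nonempty ι›
  -- value of an act
  set V : ι → (S → Z →₀ ℝ) → ℝ := fun i f => ∑ s, q i s * u i (f s) with hVdef
  have hVconst : ∀ i (r : Z →₀ ℝ), V i (fun _ => r) = u i r := fun i r =>
    const_act_value (q i) (hq i).2 (u i) r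
  -- base act
  set c₀ : S → Z →₀ ℝ := fun _ => p i₀ with hc₀def
  have hc₀lot : ∀ s, IsLottery (c₀ s) := fun _ => hp i₀
  -- pinned ratio
  set astar : ι → ι → ℝ :=
    fun i j => (u i (p j) - u i (p' j)) / (u j (p j) - u j (p' j)) with hastar
  -- violation acts
  set Cond : ι → ι → Prop := fun i j => 0 ≤ astar i j ∧
    ¬(q i = q j ∧ ∃ a : ℝ, 0 < a ∧ ∃ b : ℝ, ∀ r, IsLottery r → u i r = a * u j r + b)
    with hCond
  have hviol : ∀ i j, Cond i j → ∃ c : S → Z →₀ ℝ, (∀ s, IsLottery (c s)) ∧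
      V i c ≠ astar i j * V j c + (V i c₀ - astar i j * V j c₀) := by
    intro i j hij
    exact exists_violation (q i) (q j) (u i) (u j) (hq i).2 (hq j).2
      ⟨p i, p' i, hp i, hp' i, hpne i⟩ ⟨p j, p' j, hp j, hp' j, hpne j⟩
      hij.2 (astar i j) (V i c₀ - astar i j * V j c₀) hij.1
  set w : ι × ι → S → Z →₀ ℝ :=
    fun ij => if h : Cond ij.1 ij.2 then (hviol ij.1 ij.2 h).choose else c₀ with hwdef
  have hwlot : ∀ ij s, IsLottery (w ij s) := by
    intro ij s
    by_cases h : Cond ij.1 ij.2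
    · have e : w ij = (hviol ij.1 ij.2 h).choose := by
        simp only [hwdef]
        exact dif_pos h
      rw [e]
      exact ((hviol ij.1 ij.2 h).choose_spec).1 s
    · have e : w ij = c₀ := by
        simp only [hwdef]
        exact dif_neg h
      rw [e]
      exact hc₀lot s
  -- tests
  set c : (ι ⊕ ι ⊕ ι × ι) → S → Z →₀ ℝ :=
    Sum.elim (fun j _ => p j) (Sum.elim (fun j _ => p' j) w) with hcdef
  have hclot : ∀ k s, IsLottery (c k s) := by
    rintro (j | j | ij) s
    · exact hp j
    · exact hp' j
    · exact hwlot ij s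
  -- the vectors
  set v : ι → EuclideanSpace ℝ (ι ⊕ ι ⊕ ι × ι) :=
    fun i => WithLp.toLp 2 (fun k => V i (c k) - V i c₀) with hvdef
  have hvcongr : ∀ i j, q i = q j → u i = u j → v i = v j := by
    intro i j hqe hue
    have hVe : V i = V j := by
      funext f
      show (∑ s, q i s * u i (f s)) = ∑ s, q j s * u j (f s)
      rw [hqe, hue]
    ext k
    show V i (c k) - V i c₀ = V j (c k) - V j c₀
    rw [hVe]
  have hvA : ∀ i j, v i (Sum.inl j) - v i (Sum.inr (Sum.inl j)) = u i (p j) - u i (p' j) := by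
    intro i j
    have e1 : v i (Sum.inl j) = u i (p j) - V i c₀ := by
      show V i (fun _ => p j) - V i c₀ = u i (p j) - V i c₀
      rw [hVconst]
    have e2 : v i (Sum.inr (Sum.inl j)) = u i (p' j) - V i c₀ := by
      show V i (fun _ => p' j) - V i c₀ = u i (p' j) - V i c₀
      rw [hVconst]
    rw [e1, e2]
    ring
  have hvne : ∀ i, v i ≠ 0 := by
    intro i hv0
    apply hpne i
    have h := hvA i i
    rw [hv0] at h
    have h' : (0:ℝ) - 0 = u i (p i) - u i (p' i) := h
    linarith
  -- no nonnegative proportionality within X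
  have hnoprop : ∀ i ∈ X, ∀ j ∈ X, ¬(q i = q j ∧ u i = u j) →
      ∀ a : ℝ, 0 ≤ a → v i ≠ a • v j := by
    intro i hi j hj hpair a ha hprop
    have hclash := (hsep i hi j hj).resolve_left hpair
    -- pin a = astar i j
    have hDj : u j (p j) - u j (p' j) ≠ 0 := sub_ne_zero.2 (hpne j)
    have hpin : a = astar i j := by
      have h1 : v i (Sum.inl j) = a * v j (Sum.inl j) := by rw [hprop]; rfl
      have h2 : v i (Sum.inr (Sum.inl j)) = a * v j (Sum.inr (Sum.inl j)) := by rw [hprop]; rfl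
      have key : u i (p j) - u i (p' j) = a * (u j (p j) - u j (p' j)) := by
        rw [← hvA i j, ← hvA j j, h1, h2]
        ring
      show a = (u i (p j) - u i (p' j)) / (u j (p j) - u j (p' j))
      rw [key, mul_div_assoc, div_self hDj, mul_one]
    have hcond : Cond i j := ⟨hpin ▸ ha, hclash⟩
    have hspec := (hviol i j hcond).choose_spec
    have hcw : c (Sum.inr (Sum.inr (i, j))) = (hviol i j hcond).choose := by
      rw [hcdef]
      simp only [Sum.elim_inr]
      rw [hwdef]
      exact dif_pos hcond
    have hcoord : V i (c (Sum.inr (Sum.inr (i, j)))) - V i c₀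
        = a * (V j (c (Sum.inr (Sum.inr (i, j)))) - V j c₀) := by
      have h1 : v i (Sum.inr (Sum.inr (i, j))) = a * v j (Sum.inr (Sum.inr (i, j))) := by
        rw [hprop]; rfl
      exact h1
    rw [hcw] at hcoord
    apply hspec.2
    rw [hpin] at hcoord
    linarith [hcoord]
  -- strict Cauchy-Schwarz between states of X carrying distinct SEU pairs
  have hCS : ∀ i ∈ X, ∀ j ∈ X, ¬(q i = q j ∧ u i = u j) →
      ⟪v j, v i⟫ < ‖v j‖ * ‖v i‖ := by
    intro i hi j hj hpair
    rcases lt_or_eq_of_le (real_inner_le_norm (v j) (v i)) with h | h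
    · exact h
    · exfalso
      rw [inner_eq_norm_mul_iff_real] at h
      -- h : ‖v i‖ • v j = ‖v j‖ • v i
      have hnj : (0:ℝ) < ‖v j‖ := norm_pos_iff.2 (hvne j)
      refine hnoprop i hi j hj hpair (‖v i‖ / ‖v j‖) (by positivity) ?_
      rw [div_eq_mul_inv, mul_comm, mul_smul, h, smul_smul,
        inv_mul_cancel₀ (ne_of_gt hnj), one_smul]
  -- normalized vectors
  set d : ι → EuclideanSpace ℝ (ι ⊕ ι ⊕ ι × ι) := fun i => ‖v i‖⁻¹ • v i with hddef
  have hdcoord : ∀ i k, |d i k| ≤ 1 := by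
    intro i k
    have h1 := coord_le_norm (d i) k
    have h2 : ‖d i‖ = 1 := by
      show ‖‖v i‖⁻¹ • v i‖ = 1
      rw [norm_smul, norm_inv, norm_norm, inv_mul_cancel₀ (norm_ne_zero_iff.2 (hvne i))]
    rwa [h2] at h1
  set N : ℕ := Fintype.card (ι ⊕ ι ⊕ ι × ι) with hNdef
  have hNpos : 0 < (N:ℝ) := by
    have : Nonempty (ι ⊕ ι ⊕ ι × ι) := ⟨Sum.inl i₀⟩
    exact_mod_cast Fintype.card_pos
  set ε : ℝ := 1/(2*(N:ℝ)) with hεdef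
  have hεpos : 0 < ε := by rw [hεdef]; positivity
  set α : ι → (ι ⊕ ι ⊕ ι × ι) → ℝ := fun i k => ε + ε * d i k with hαdef
  have hα0 : ∀ i k, 0 ≤ α i k := by
    intro i k
    show 0 ≤ ε + ε * d i k
    nlinarith [abs_le.1 (hdcoord i k), hεpos]
  have hα1 : ∀ i, ∑ k, α i k ≤ 1 := by
    intro i
    have h1 : ∑ k, α i k = N * ε + ε * ∑ k, d i k := by
      show ∑ k, (ε + ε * d i k) = _
      rw [Finset.sum_add_distrib, Finset.sum_const, Finset.card_univ, ← Finset.mul_sum]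
      simp [hNdef, nsmul_eq_mul]
    have h2 : ∑ k, d i k ≤ (N:ℝ) := by
      calc ∑ k, d i k ≤ ∑ _k : (ι ⊕ ι ⊕ ι × ι), (1:ℝ) :=
            Finset.sum_le_sum (fun k _ => (abs_le.1 (hdcoord i k)).2)
        _ = (N:ℝ) := by rw [Finset.sum_const, Finset.card_univ]; simp [hNdef]
    have h3 : ε * ∑ k, d i k ≤ ε * N := mul_le_mul_of_nonneg_left h2 hεpos.le
    have h4 : (N:ℝ) * ε + ε * N = 1 := by
      rw [hεdef]
      field_simp
      ring
    linarith
  -- the menu items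
  set f : ι → S → Z →₀ ℝ :=
    fun i s => (1 - ∑ k, α i k) • c₀ s + ∑ k, α i k • c k s with hfdef
  have hmix : ∀ i' i : ι, (∀ s, IsLottery (f i s)) ∧
      V i' (f i) = (1 - ∑ k, α i k) * V i' c₀ + ∑ k, α i k * V i' (c k) :=
    fun i' i => mix_lottery_and_value (q i') (hq i').2 (hu i') c₀ c hc₀lot hclot
      (α i) (hα0 i) (hα1 i)
  have hval : ∀ i' i : ι, V i' (f i) = V i' c₀ + ∑ k, α i k * v i' k := by
    intro i' i
    rw [(hmix i' i).2]
    have h1 : ∀ k, α i k * v i' k = α i k * V i' (c k) - α i k * V i' c₀ := by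
      intro k
      show α i k * (V i' (c k) - V i' c₀) = _
      ring
    rw [Finset.sum_congr rfl (fun k _ => h1 k), Finset.sum_sub_distrib, ← Finset.sum_mul]
    ring
  have hinner : ∀ x y : EuclideanSpace ℝ (ι ⊕ ι ⊕ ι × ι), ⟪x, y⟫ = ∑ k, x k * y k := by
    intro x y
    simp [PiLp.inner_apply, RCLike.inner_apply, conj_trivial, mul_comm]
  have hdiff : ∀ i ∈ X, ∀ j ∈ X, ¬(q i = q j ∧ u i = u j) → V i (f j) < V i (f i) := by
    intro i hi j hj hpair
    have h1 : ∑ k, α i k * v i k - ∑ k, α j k * v i k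
        = ε * (⟪d i, v i⟫ - ⟪d j, v i⟫) := by
      rw [hinner, hinner, ← Finset.sum_sub_distrib, ← Finset.sum_sub_distrib, Finset.mul_sum]
      refine Finset.sum_congr rfl fun k _ => ?_
      show (ε + ε * d i k) * v i k - (ε + ε * d j k) * v i k
        = ε * (d i k * v i k - d j k * v i k)
      ring
    have hdi : ⟪d i, v i⟫ = ‖v i‖ := by
      show ⟪‖v i‖⁻¹ • v i, v i⟫ = ‖v i‖
      rw [real_inner_smul_left, real_inner_self_eq_norm_mul_norm]
      have : ‖v i‖ ≠ 0 := norm_ne_zero_iff.2 (hvne i)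
      field_simp
    have hdj : ⟪d j, v i⟫ < ‖v i‖ := by
      show ⟪‖v j‖⁻¹ • v j, v i⟫ < ‖v i‖
      rw [real_inner_smul_left]
      have hpos : (0:ℝ) < ‖v j‖ := norm_pos_iff.2 (hvne j)
      calc ‖v j‖⁻¹ * ⟪v j, v i⟫ < ‖v j‖⁻¹ * (‖v j‖ * ‖v i‖) :=
            mul_lt_mul_of_pos_left (hCS i hi j hj hpair) (inv_pos.2 hpos)
        _ = ‖v i‖ := by field_simp
    have h2 : 0 < ε * (⟪d i, v i⟫ - ⟪d j, v i⟫) := mul_pos hεpos (by linarith)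
    have h3 := hval i i
    have h4 := hval i j
    linarith
  -- conclude
  refine ⟨f, fun i s => (hmix i i).1 s, ?_, ?_⟩
  · intro i j hqe hue
    have hv := hvcongr i j hqe hue
    have hde : d i = d j := by
      show ‖v i‖⁻¹ • v i = ‖v j‖⁻¹ • v j
      rw [hv]
    have hαe : α i = α j := by
      funext k
      show ε + ε * d i k = ε + ε * d j k
      rw [hde]
    funext s
    show (1 - ∑ k, α i k) • c₀ s + ∑ k, α i k • c k s
      = (1 - ∑ k, α j k) • c₀ s + ∑ k, α j k • c k s
    rw [hαe]
  · intro i hi j hj hpair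
    exact hdiff i hi j hj hpair

/-- Existence of separating histories: for every state `θ_t` of a DR-SEU
representation (with its predecessor chain `θ_0,…,θ_{t−1}`) there is a history
`h^t = (B_0,g_0,s_0;…;B_t,g_t,s_t)` without ties such that at every period `k ≤ t`
the only SEU in the support of the relevant kernel that can rationalize the choice
`g_k` from `B_k` together with the realized objective state is the SEU of `θ_k`. -/
theorem separating_history_exists
    {Θ Sp Z : ℕ → Type*} [∀ t, Fintype (Θ t)] [∀ t, Fintype (Sp t)]
    (πq : ∀ t, Θ t → Sp t → ℝ) (πu : ∀ t, Θ t → (Z t →₀ ℝ) → ℝ) (πs : ∀ t, Θ t → Sp t)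
    (ψ0 : Θ 0 → ℝ) (ψ : ∀ t, Θ t → Θ (t + 1) → ℝ)
    -- DR-SEU 1: each state carries a non-constant SEU with belief a probability,
    -- and the realized objective state lies in the support of the belief
    (hqprob : ∀ t (x : Θ t), (∀ s, 0 ≤ πq t x s) ∧ (∑ s, πq t x s) = 1)
    (haff : ∀ t (x : Θ t), IsAffineOnLotteries (πu t x))
    (hnc : ∀ t (x : Θ t), ∃ p p', IsLottery p ∧ IsLottery p' ∧ πu t x p ≠ πu t x p')
    (hssupp : ∀ t (x : Θ t), 0 < πq t x (πs t x))
    -- within each support, two states either carry literally the same SEU pair or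
    -- represent distinct SEU preferences (so separating menus exist)
    (hsep0 : ∀ x y : Θ 0, ψ0 x ≠ 0 → ψ0 y ≠ 0 →
      (πq 0 x = πq 0 y ∧ πu 0 x = πu 0 y) ∨
      ¬(πq 0 x = πq 0 y ∧ ∃ a : ℝ, 0 < a ∧ ∃ b : ℝ,
          ∀ p, IsLottery p → πu 0 x p = a * πu 0 y p + b))
    (hsep : ∀ t (w : Θ t) (x y : Θ (t + 1)), ψ t w x ≠ 0 → ψ t w y ≠ 0 →
      (πq (t + 1) x = πq (t + 1) y ∧ πu (t + 1) x = πu (t + 1) y) ∨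
      ¬(πq (t + 1) x = πq (t + 1) y ∧ ∃ a : ℝ, 0 < a ∧ ∃ b : ℝ,
          ∀ p, IsLottery p → πu (t + 1) x p = a * πu (t + 1) y p + b))
    (t : ℕ)
    -- θ_t with its predecessor chain
    (θ : ∀ k, Θ k)
    (hθ0 : ψ0 (θ 0) ≠ 0)
    (hθlink : ∀ k, k < t → ψ k (θ k) (θ (k + 1)) ≠ 0) :
    ∃ (B : ∀ k, Finset (Sp k → Z k →₀ ℝ)) (g : ∀ k, Sp k → Z k →₀ ℝ),
      (∀ k, k ≤ t → g k ∈ B k) ∧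
      (∀ k, k ≤ t → ∀ f ∈ B k, ∀ s, IsLottery (f s)) ∧
      -- g_k is optimal in B_k for the SEU of θ_k
      (∀ k, k ≤ t → ∀ f ∈ B k,
        (∑ s, πq k (θ k) s * πu k (θ k) (f s)) ≤ ∑ s, πq k (θ k) s * πu k (θ k) (g k s)) ∧
      -- QU_{θ_{k−1}}(B_k, g_k, π_s(θ_k)) = {π_qu(θ_k)}: period 0
      (∀ x : Θ 0, ψ0 x ≠ 0 → πs 0 x = πs 0 (θ 0) →
        (∀ f ∈ B 0, (∑ s, πq 0 x s * πu 0 x (f s)) ≤ ∑ s, πq 0 x s * πu 0 x (g 0 s)) →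
        πq 0 x = πq 0 (θ 0) ∧ πu 0 x = πu 0 (θ 0)) ∧
      -- and later periods
      (∀ k, k < t → ∀ x : Θ (k + 1), ψ k (θ k) x ≠ 0 → πs (k + 1) x = πs (k + 1) (θ (k + 1)) →
        (∀ f ∈ B (k + 1),
          (∑ s, πq (k + 1) x s * πu (k + 1) x (f s)) ≤
            ∑ s, πq (k + 1) x s * πu (k + 1) x (g (k + 1) s)) →
        πq (k + 1) x = πq (k + 1) (θ (k + 1)) ∧ πu (k + 1) x = πu (k + 1) (θ (k + 1))) ∧
      -- the history is without ties: every SEU in the support of the relevant kernel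
      -- has a unique maximizer in the menu
      (∀ x : Θ 0, ψ0 x ≠ 0 →
        ∃! f : Sp 0 → Z 0 →₀ ℝ, f ∈ B 0 ∧
          ∀ h ∈ B 0, (∑ s, πq 0 x s * πu 0 x (h s)) ≤ ∑ s, πq 0 x s * πu 0 x (f s)) ∧
      (∀ k, k < t → ∀ x : Θ (k + 1), ψ k (θ k) x ≠ 0 →
        ∃! f : Sp (k + 1) → Z (k + 1) →₀ ℝ, f ∈ B (k + 1) ∧
          ∀ h ∈ B (k + 1),
            (∑ s, πq (k + 1) x s * πu (k + 1) x (h s)) ≤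
              ∑ s, πq (k + 1) x s * πu (k + 1) x (f s)) := by
  classical
  -- supports at each period
  set X : ∀ k, Finset (Θ k) := fun k =>
    match k with
    | 0 => Finset.univ.filter fun x => ψ0 x ≠ 0
    | (k' + 1) => Finset.univ.filter fun x => ψ k' (θ k') x ≠ 0
    with hXdef
  have hmem0 : ∀ x : Θ 0, ψ0 x ≠ 0 → x ∈ X 0 := fun x hx =>
    Finset.mem_filter.2 ⟨Finset.mem_univ _, hx⟩
  have hmem0' : ∀ x : Θ 0, x ∈ X 0 → ψ0 x ≠ 0 := fun x hx =>
    (Finset.mem_filter.1 hx).2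
  have hmemS : ∀ k (x : Θ (k + 1)), ψ k (θ k) x ≠ 0 → x ∈ X (k + 1) := fun k x hx =>
    Finset.mem_filter.2 ⟨Finset.mem_univ _, hx⟩
  have hmemS' : ∀ k (x : Θ (k + 1)), x ∈ X (k + 1) → ψ k (θ k) x ≠ 0 := fun k x hx =>
    (Finset.mem_filter.1 hx).2
  have hsepX : ∀ k, ∀ i ∈ X k, ∀ j ∈ X k,
      (πq k i = πq k j ∧ πu k i = πu k j) ∨
      ¬(πq k i = πq k j ∧ ∃ a : ℝ, 0 < a ∧ ∃ b : ℝ,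
          ∀ p, IsLottery p → πu k i p = a * πu k j p + b) := by
    intro k
    match k with
    | 0 => exact fun i hi j hj => hsep0 i j (hmem0' i hi) (hmem0' j hj)
    | (k' + 1) => exact fun i hi j hj => hsep k' (θ k') i j (hmemS' k' i hi) (hmemS' k' j hj)
  have hkey : ∀ k, ∃ f : Θ k → Sp k → Z k →₀ ℝ,
      (∀ i s, IsLottery (f i s)) ∧
      (∀ i j, πq k i = πq k j → πu k i = πu k j → f i = f j) ∧
      (∀ i ∈ X k, ∀ j ∈ X k, ¬(πq k i = πq k j ∧ πu k i = πu k j) →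
        (∑ s, πq k i s * πu k i (f j s)) < ∑ s, πq k i s * πu k i (f i s)) := by
    intro k
    haveI : Nonempty (Θ k) := ⟨θ k⟩
    exact core_menu (πq k) (πu k) (hqprob k) (haff k) (hnc k) (X k) (hsepX k)
  choose F hFlot hFcongr hFdiff using hkey
  have hθmem : ∀ k, k ≤ t → θ k ∈ X k := by
    intro k hk
    match k with
    | 0 => exact hmem0 _ hθ0
    | (k' + 1) => exact hmemS k' _ (hθlink k' (Nat.lt_of_succ_le hk))
  refine ⟨fun k => (X k).image (F k), fun k => F k (θ k), ?_, ?_, ?_, ?_, ?_, ?_, ?_⟩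
  · -- g k ∈ B k
    exact fun k hk => Finset.mem_image_of_mem _ (hθmem k hk)
  · -- lotteries
    intro k _ f hf s
    obtain ⟨y, _, rfl⟩ := Finset.mem_image.1 hf
    exact hFlot k y s
  · -- optimality of g for θ k
    intro k hk f hf
    obtain ⟨y, hy, rfl⟩ := Finset.mem_image.1 hf
    by_cases hpair : πq k y = πq k (θ k) ∧ πu k y = πu k (θ k)
    · rw [hFcongr k y (θ k) hpair.1 hpair.2]
    · exact le_of_lt (hFdiff k (θ k) (hθmem k hk) y hy
        (fun hc => hpair ⟨hc.1.symm, hc.2.symm⟩))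
  · -- separation at period 0
    intro x hx _ hopt
    by_contra hpair
    have h1 := hFdiff 0 x (hmem0 x hx) (θ 0) (hθmem 0 (Nat.zero_le t)) hpair
    have h2 := hopt (F 0 x) (Finset.mem_image_of_mem _ (hmem0 x hx))
    linarith
  · -- separation at later periods
    intro k hk x hx _ hopt
    by_contra hpair
    have h1 := hFdiff (k + 1) x (hmemS k x hx) (θ (k + 1))
      (hθmem (k + 1) (Nat.succ_le_of_lt hk)) hpair
    have h2 := hopt (F (k + 1) x) (Finset.mem_image_of_mem _ (hmemS k x hx))
    linarith
  · -- no ties at period 0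
    intro x hx
    have hxX := hmem0 x hx
    refine ⟨F 0 x, ⟨Finset.mem_image_of_mem _ hxX, ?_⟩, ?_⟩
    · intro h hh
      obtain ⟨y, hy, rfl⟩ := Finset.mem_image.1 hh
      by_cases hpair : πq 0 y = πq 0 x ∧ πu 0 y = πu 0 x
      · rw [hFcongr 0 y x hpair.1 hpair.2]
      · exact le_of_lt (hFdiff 0 x hxX y hy (fun hc => hpair ⟨hc.1.symm, hc.2.symm⟩))
    · rintro f' ⟨hf'B, hf'max⟩
      obtain ⟨y, hy, rfl⟩ := Finset.mem_image.1 hf'B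
      by_cases hpair : πq 0 y = πq 0 x ∧ πu 0 y = πu 0 x
      · exact hFcongr 0 y x hpair.1 hpair.2
      · exfalso
        have h1 := hFdiff 0 x hxX y hy (fun hc => hpair ⟨hc.1.symm, hc.2.symm⟩)
        have h2 := hf'max (F 0 x) (Finset.mem_image_of_mem _ hxX)
        linarith
  · -- no ties at later periods
    intro k _ x hx
    have hxX := hmemS k x hx
    refine ⟨F (k + 1) x, ⟨Finset.mem_image_of_mem _ hxX, ?_⟩, ?_⟩
    · intro h hh
      obtain ⟨y, hy, rfl⟩ := Finset.mem_image.1 hh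
      by_cases hpair : πq (k + 1) y = πq (k + 1) x ∧ πu (k + 1) y = πu (k + 1) x
      · rw [hFcongr (k + 1) y x hpair.1 hpair.2]
      · exact le_of_lt (hFdiff (k + 1) x hxX y hy (fun hc => hpair ⟨hc.1.symm, hc.2.symm⟩))
    · rintro f' ⟨hf'B, hf'max⟩
      obtain ⟨y, hy, rfl⟩ := Finset.mem_image.1 hf'B
      by_cases hpair : πq (k + 1) y = πq (k + 1) x ∧ πu (k + 1) y = πu (k + 1) x
      · exact hFcongr (k + 1) y x hpair.1 hpair.2
      · exfalso
        have h1 := hFdiff (k + 1) x hxX y hy (fun hc => hpair ⟨hc.1.symm, hc.2.symm⟩)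
        have h2 := hf'max (F (k + 1) x) (Finset.mem_image_of_mem _ hxX)
        linarith
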